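/- Let W be a purely morphic word generated by a primitive morphism φ (so W = φ^∞(a₁) where φ(a₁) = a₁u and φ is primitive). Then the recurrence function P₂ of W is bounded above by a linear function: there exists C₃ such that P₂(N) ≤ C₃·N for all N ≥ 1. -/

import Mathlib

/-- The factor (subword) of the infinite word `W` of length `n` starting at position `i`. -/
def factorAt {A : Type*} (W : ℕ → A) (i n : ℕ) : List A :=
  (List.range n).map (fun j => W (i + j))

/-- `u` is a finite factor of the infinite word `W`. -/
def IsFactorOf {A : Type*} (u : List A) (W : ℕ → A) : Prop :=
  ∃ i, u = factorAt W i u.length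

/-- The monoid morphism `A* → B*` induced by a substitution on letters. -/
def msubst {A B : Type*} (φ : A → List B) (w : List A) : List B :=
  w.flatMap φ

def itlen {A : Type*} (φ : A → List A) (m : ℕ) (a : A) : ℕ :=
  ((msubst φ)^[m] [a]).length

lemma msubst_append {A : Type*} (φ : A → List A) (x y : List A) :
    msubst φ (x ++ y) = msubst φ x ++ msubst φ y := by
  simp [msubst]

lemma msubst_nil {A : Type*} (φ : A → List A) : msubst φ [] = [] := rfl

lemma msubst_singleton {A : Type*} (φ : A → List A) (a : A) : msubst φ [a] = φ a := by
  simp [msubst]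

lemma iter_append {A : Type*} (φ : A → List A) (n : ℕ) (x y : List A) :
    (msubst φ)^[n] (x ++ y) = (msubst φ)^[n] x ++ (msubst φ)^[n] y := by
  induction n generalizing x y with
  | zero => rfl
  | succ n ih => rw [Function.iterate_succ_apply, Function.iterate_succ_apply,
      Function.iterate_succ_apply, msubst_append, ih]

lemma iter_nil {A : Type*} (φ : A → List A) (n : ℕ) : (msubst φ)^[n] [] = [] := by
  induction n with
  | zero => rfl
  | succ n ih => rw [Function.iterate_succ_apply, msubst_nil, ih]

lemma iter_infix {A : Type*} (φ : A → List A) (n : ℕ) {s l : List A} (h : s <:+: l) :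
    (msubst φ)^[n] s <:+: (msubst φ)^[n] l := by
  obtain ⟨x, y, rfl⟩ := h
  rw [iter_append, iter_append]
  exact ⟨_, _, rfl⟩

lemma factorAt_length {A : Type*} (W : ℕ → A) (i n : ℕ) : (factorAt W i n).length = n := by
  simp [factorAt]

lemma factorAt_add {A : Type*} (W : ℕ → A) (i m n : ℕ) :
    factorAt W i (m + n) = factorAt W i m ++ factorAt W (i + m) n := by
  simp [factorAt, List.range_add, List.map_map, Function.comp_def, Nat.add_assoc]

lemma factorAt_one {A : Type*} (W : ℕ → A) (i : ℕ) : factorAt W i 1 = [W i] := by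
  simp [factorAt, List.range_succ]

lemma factorAt_infix {A : Type*} (W : ℕ → A) {i n p q : ℕ} (h1 : i ≤ p) (h2 : p + q ≤ i + n) :
    factorAt W p q <:+: factorAt W i n := by
  have hn : n = (p - i) + (q + (i + n - p - q)) := by omega
  rw [hn, factorAt_add, factorAt_add]
  have hp : i + (p - i) = p := by omega
  rw [hp]
  exact ⟨factorAt W i (p - i), factorAt W (p + q) (i + n - p - q), by
    rw [List.append_assoc]⟩

lemma factorAt_prefix_eq {A : Type*} {W : ℕ → A} {x : List A} {i n : ℕ}
    (h : x <+: factorAt W i n) : x = factorAt W i x.length := by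
  have hlen : x.length ≤ n := by
    have := h.length_le
    rwa [factorAt_length] at this
  have h0 : factorAt W i x.length <+: factorAt W i n := by
    have hn : n = x.length + (n - x.length) := by omega
    rw [hn, factorAt_add]
    exact ⟨_, rfl⟩
  have h1 : x <+: factorAt W i x.length :=
    List.prefix_of_prefix_length_le h h0 (by rw [factorAt_length])
  exact h1.eq_of_length (by rw [factorAt_length])

def posW {A : Type*} (φ : A → List A) (W : ℕ → A) (m t : ℕ) : ℕ :=
  ((msubst φ)^[m] (factorAt W 0 t)).length

/-- A purely morphic word generated by a primitive morphism has a linearly bounded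
recurrence function: every factor of length C₃·N contains every factor of length N. -/
theorem stmt2 {A : Type*} [Fintype A] (φ : A → List A) (a₁ : A) (u : List A)
    (hfix : φ a₁ = a₁ :: u)
    (hgrow : ∀ n : ℕ, (msubst φ)^[n] u ≠ [])
    (hprim : ∃ k : ℕ, ∀ a b : A, b ∈ (msubst φ)^[k] [a])
    (W : ℕ → A)
    (hW : ∀ n : ℕ, factorAt W 0 ((msubst φ)^[n] [a₁]).length = (msubst φ)^[n] [a₁]) :
    ∃ C₃ : ℕ, ∀ N ≥ 1, ∀ u' v : List A,
      IsFactorOf u' W → u'.length = C₃ * N →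
      IsFactorOf v W → v.length = N → v <:+: u' := by
  classical
  obtain ⟨k, hk⟩ := hprim
  -- every letter has nonempty image
  have hne : ∀ a : A, φ a ≠ [] := by
    intro a
    match k, hk with
    | 0, hk =>
      have h1 : a₁ ∈ [a] := hk a a₁
      have h2 : a = a₁ := (List.mem_singleton.mp h1).symm
      rw [h2, hfix]; simp
    | (j+1), hk =>
      intro hcon
      have h1 : (msubst φ)^[j+1] [a] = [] := by
        rw [Function.iterate_succ_apply, msubst_singleton, hcon, iter_nil]
      have h2 := hk a a
      rw [h1] at h2
      exact absurd h2 List.not_mem_nil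
  have hne_iter : ∀ (n : ℕ) (l : List A), l ≠ [] → (msubst φ)^[n] l ≠ [] := by
    intro n
    induction n with
    | zero => intro l h; exact h
    | succ n ih =>
      intro l h
      rw [Function.iterate_succ_apply]
      apply ih
      match l, h with
      | (a :: t), _ =>
        show msubst φ ([a] ++ t) ≠ []
        rw [msubst_append, msubst_singleton]
        simp [hne a]
  have hlen1 : ∀ (n : ℕ) (a : A), 1 ≤ itlen φ n a := by
    intro n a
    show 1 ≤ ((msubst φ)^[n] [a]).length
    exact List.length_pos_iff.mpr (hne_iter n [a] (by simp))
  -- prefixes grow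
  have hprefLen : ∀ n : ℕ, n + 1 ≤ ((msubst φ)^[n] [a₁]).length := by
    intro n
    induction n with
    | zero => simp
    | succ n ih =>
      have h1 : (msubst φ)^[n+1] [a₁] = (msubst φ)^[n] [a₁] ++ (msubst φ)^[n] u := by
        rw [Function.iterate_succ_apply, msubst_singleton, hfix]
        show (msubst φ)^[n] ([a₁] ++ u) = _
        rw [iter_append]
      rw [h1, List.length_append]
      have := List.length_pos_iff.mpr (hgrow n)
      omega
  set Cmax := Finset.univ.sup (fun a : A => (φ a).length) with hCmax
  have hC1 : 1 ≤ Cmax := by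
    have h1 : (φ a₁).length ≤ Cmax := Finset.le_sup (f := fun a : A => (φ a).length) (Finset.mem_univ a₁)
    have h2 : 1 ≤ (φ a₁).length := List.length_pos_iff.mpr (hne a₁)
    omega
  have hmul : ∀ l : List A, (msubst φ l).length ≤ Cmax * l.length := by
    intro l
    induction l with
    | nil => simp [msubst]
    | cons a t ih =>
      have h1 : msubst φ (a :: t) = φ a ++ msubst φ t := by
        show msubst φ ([a] ++ t) = _
        rw [msubst_append, msubst_singleton]
      rw [h1, List.length_append, List.length_cons, Nat.mul_succ]
      have h2 : (φ a).length ≤ Cmax := Finset.le_sup (f := fun a : A => (φ a).length) (Finset.mem_univ a)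
      omega
  have hiter_mul : ∀ (j : ℕ) (l : List A), ((msubst φ)^[j] l).length ≤ Cmax ^ j * l.length := by
    intro j
    induction j with
    | zero => simp
    | succ j ih =>
      intro l
      rw [Function.iterate_succ_apply]
      calc ((msubst φ)^[j] (msubst φ l)).length ≤ Cmax ^ j * (msubst φ l).length := ih _
        _ ≤ Cmax ^ j * (Cmax * l.length) := Nat.mul_le_mul_left _ (hmul l)
        _ = Cmax ^ (j+1) * l.length := by ring
  have hlen_add : ∀ (j n : ℕ) (a : A), itlen φ (j + n) a ≤ Cmax ^ j * itlen φ n a := by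
    intro j n a
    show ((msubst φ)^[j + n] [a]).length ≤ Cmax ^ j * ((msubst φ)^[n] [a]).length
    rw [Function.iterate_add_apply]
    exact hiter_mul j _
  have hmono : ∀ (n : ℕ) (a b : A), itlen φ n b ≤ itlen φ (n + k) a := by
    intro n a b
    have hb : b ∈ (msubst φ)^[k] [a] := hk a b
    obtain ⟨x, y, hxy⟩ := List.append_of_mem hb
    have h2 : [b] <:+: (msubst φ)^[k] [a] := ⟨x, y, by rw [hxy]; simp⟩
    have h3 := iter_infix φ n h2
    rw [← Function.iterate_add_apply] at h3
    exact h3.length_le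
  have hlenN : ∀ (n : ℕ) (a : A), n + 1 ≤ itlen φ (n + k) a := by
    intro n a
    exact le_trans (hprefLen n) (hmono n a a₁)
  -- K : level whose prefix contains every length-2 factor of W
  set F : A × A → ℕ := fun p =>
    if h : ∃ s, W s = p.1 ∧ W (s+1) = p.2 then h.choose + 1 else 0 with hF
  set K := Finset.univ.sup F with hKdef
  have hfact2 : ∀ t : ℕ, factorAt W t 2 = [W t, W (t+1)] := by
    intro t
    have : (2 : ℕ) = 1 + 1 := rfl
    rw [this, factorAt_add, factorAt_one, factorAt_one]
    rfl
  have hK : ∀ t : ℕ, [W t, W (t+1)] <:+: (msubst φ)^[K] [a₁] := by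
    intro t
    have hex : ∃ s, W s = (W t, W (t+1)).1 ∧ W (s+1) = (W t, W (t+1)).2 := ⟨t, rfl, rfl⟩
    obtain ⟨hs1, hs2⟩ := hex.choose_spec
    set s := hex.choose with hsdef
    have hsK : s + 1 ≤ K := by
      have h1 : F (W t, W (t+1)) ≤ K := Finset.le_sup (Finset.mem_univ _)
      rw [hF] at h1
      simp only [dif_pos hex] at h1
      omega
    have h2 : [W t, W (t+1)] = factorAt W s 2 := by
      rw [hfact2 s, hs1, hs2]
    have h3 : factorAt W s 2 <:+: factorAt W 0 ((msubst φ)^[K] [a₁]).length := by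
      apply factorAt_infix
      · omega
      · have := hprefLen K
        omega
    rw [h2, ← hW K]
    exact h3
  -- prefixes of W and images
  have htake : ∀ t n : ℕ, t ≤ ((msubst φ)^[n] [a₁]).length →
      factorAt W 0 t = ((msubst φ)^[n] [a₁]).take t := by
    intro t n ht
    have h1 : ((msubst φ)^[n] [a₁]).take t <+: factorAt W 0 ((msubst φ)^[n] [a₁]).length := by
      rw [hW n]; exact List.take_prefix _ _
    have h2 := factorAt_prefix_eq h1
    rw [h2, List.length_take, min_eq_left ht]
  have hIm : ∀ m t : ℕ, (msubst φ)^[m] (factorAt W 0 t) = factorAt W 0 (posW φ W m t) := by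
    intro m t
    have ht : t ≤ ((msubst φ)^[t] [a₁]).length := by have := hprefLen t; omega
    have h1 : factorAt W 0 t = ((msubst φ)^[t] [a₁]).take t := htake t t ht
    obtain ⟨r, hr⟩ := List.take_prefix t ((msubst φ)^[t] [a₁])
    have h2 : (msubst φ)^[m] (factorAt W 0 t) <+: (msubst φ)^[m + t] [a₁] := by
      refine ⟨(msubst φ)^[m] r, ?_⟩
      rw [h1, ← iter_append, hr, ← Function.iterate_add_apply]
    have h3 : (msubst φ)^[m] (factorAt W 0 t) <+:
        factorAt W 0 ((msubst φ)^[m + t] [a₁]).length := by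
      rw [hW]; exact h2
    exact factorAt_prefix_eq h3
  have hfactS : ∀ t : ℕ, factorAt W 0 (t + 1) = factorAt W 0 t ++ [W t] := by
    intro t
    rw [factorAt_add, factorAt_one, Nat.zero_add]
  have hposS : ∀ m t : ℕ, posW φ W m (t+1) = posW φ W m t + itlen φ m (W t) := by
    intro m t
    show ((msubst φ)^[m] (factorAt W 0 (t+1))).length = _
    rw [hfactS t, iter_append, List.length_append]
    rfl
  have hpos0 : ∀ m : ℕ, posW φ W m 0 = 0 := by
    intro m
    show ((msubst φ)^[m] (factorAt W 0 0)).length = 0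
    have h0 : factorAt W 0 0 = [] := rfl
    rw [h0, iter_nil]
    rfl
  have hblock : ∀ m t : ℕ,
      (msubst φ)^[m] [W t] = factorAt W (posW φ W m t) (itlen φ m (W t)) := by
    intro m t
    have e1 : (msubst φ)^[m] (factorAt W 0 (t+1))
        = factorAt W 0 (posW φ W m t) ++ (msubst φ)^[m] [W t] := by
      rw [hfactS t, iter_append, hIm m t]
    have e2 : (msubst φ)^[m] (factorAt W 0 (t+1))
        = factorAt W 0 (posW φ W m t) ++ factorAt W (posW φ W m t) (itlen φ m (W t)) := by
      rw [hIm m (t+1), hposS m t, factorAt_add, Nat.zero_add]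
    exact List.append_cancel_left (e1.symm.trans e2)
  have hblock2 : ∀ m t : ℕ, (msubst φ)^[m] [W t, W (t+1)]
      = factorAt W (posW φ W m t) (itlen φ m (W t) + itlen φ m (W (t+1))) := by
    intro m t
    have h0 : [W t, W (t+1)] = [W t] ++ [W (t+1)] := rfl
    rw [h0, iter_append, hblock m t, hblock m (t+1), factorAt_add, hposS m t]
  have hfind : ∀ m i : ℕ, ∃ t, posW φ W m t ≤ i ∧ i < posW φ W m (t+1) := by
    intro m i
    induction i with
    | zero =>
      refine ⟨0, le_of_eq (hpos0 m), ?_⟩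
      rw [hposS m 0, hpos0 m]
      have := hlen1 m (W 0)
      omega
    | succ i ih =>
      obtain ⟨t, h1, h2⟩ := ih
      by_cases h : i + 1 < posW φ W m (t+1)
      · exact ⟨t, by omega, h⟩
      · refine ⟨t+1, by omega, ?_⟩
        rw [hposS m (t+1)]
        have := hlen1 m (W (t+1))
        omega
  -- choose the constant
  refine ⟨2 * Cmax ^ (K + 2*k + 1), ?_⟩
  intro N hN u' v hu' hulen hv hvlen
  -- minimal level where all letter images have length ≥ N
  have hexm : ∃ m, ∀ a : A, N ≤ itlen φ m a := by
    refine ⟨N + k, fun a => ?_⟩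
    have := hlenN N a
    omega
  obtain ⟨m₀, hP, hmin⟩ : ∃ m, (∀ a : A, N ≤ itlen φ m a) ∧
      ∀ m' < m, ¬ (∀ a : A, N ≤ itlen φ m' a) :=
    ⟨Nat.find hexm, Nat.find_spec hexm, fun m' h => Nat.find_min hexm h⟩
  set M := m₀ + K + k with hM
  -- bound on block lengths at level M
  have hLmaxM : ∀ c : A, itlen φ M c ≤ Cmax ^ (K + 2*k + 1) * N := by
    intro c
    have hsmall : itlen φ m₀ c ≤ Cmax ^ (k + 1) * N := by
      match m₀, hP, hmin with
      | 0, hP, _ =>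
        have h1 : itlen φ 0 c = 1 := rfl
        have h2 : 1 ≤ Cmax ^ (k+1) := Nat.one_le_pow _ _ hC1
        have h3 : 1 * 1 ≤ Cmax ^ (k+1) * N := Nat.mul_le_mul h2 hN
        omega
      | (m'+1), _, hmin =>
        have hnp := hmin m' (Nat.lt_succ_self m')
        push_neg at hnp
        obtain ⟨a0, ha0⟩ := hnp
        have h1 : itlen φ m' c ≤ itlen φ (m' + k) a0 := hmono m' a0 c
        have h2 : itlen φ (m' + k) a0 ≤ Cmax ^ k * itlen φ m' a0 := by
          have := hlen_add k m' a0
          rwa [Nat.add_comm k m'] at this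
        have h3 : Cmax ^ k * itlen φ m' a0 ≤ Cmax ^ k * N :=
          Nat.mul_le_mul_left _ (le_of_lt ha0)
        have h4 : itlen φ (m'+1) c ≤ Cmax ^ 1 * itlen φ m' c := by
          have := hlen_add 1 m' c
          rwa [Nat.add_comm 1 m'] at this
        calc itlen φ (m'+1) c ≤ Cmax ^ 1 * itlen φ m' c := h4
          _ ≤ Cmax ^ 1 * (Cmax ^ k * N) := Nat.mul_le_mul_left _ (le_trans h1 (le_trans h2 h3))
          _ = Cmax ^ (k+1) * N := by ring
    have h5 : itlen φ M c ≤ Cmax ^ (K + k) * itlen φ m₀ c := by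
      have := hlen_add (K + k) m₀ c
      have he : K + k + m₀ = M := by omega
      rwa [he] at this
    calc itlen φ M c ≤ Cmax ^ (K + k) * itlen φ m₀ c := h5
      _ ≤ Cmax ^ (K + k) * (Cmax ^ (k+1) * N) := Nat.mul_le_mul_left _ hsmall
      _ = Cmax ^ (K + k + (k + 1)) * N := by ring
      _ = Cmax ^ (K + 2*k + 1) * N := by
          have : K + k + (k + 1) = K + 2*k + 1 := by omega
          rw [this]
  obtain ⟨i, hvi⟩ := hv
  obtain ⟨i', hui⟩ := hu'
  -- Claim A : v is an infix of the image of a 2-letter factor at level m₀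
  obtain ⟨t, ha1, ha2⟩ := hfind m₀ i
  have hA : v <:+: (msubst φ)^[m₀] [W t, W (t+1)] := by
    rw [hblock2 m₀ t, hvi, hvlen]
    apply factorAt_infix
    · exact ha1
    · have e1 := hposS m₀ t
      have e2 := hposS m₀ (t+1)
      have e3 := hP (W (t+1))
      omega
  -- the 2-letter factor lives in the K-prefix
  have hB : (msubst φ)^[m₀] [W t, W (t+1)] <:+: (msubst φ)^[m₀ + K] [a₁] := by
    have h1 := iter_infix φ m₀ (hK t)
    rwa [← Function.iterate_add_apply] at h1
  -- the K-prefix image is inside every level-M block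
  have hC : ∀ c : A, (msubst φ)^[m₀ + K] [a₁] <:+: (msubst φ)^[M] [c] := by
    intro c
    have h1 : a₁ ∈ (msubst φ)^[k] [c] := hk c a₁
    obtain ⟨x, y, hxy⟩ := List.append_of_mem h1
    have h2 : [a₁] <:+: (msubst φ)^[k] [c] := ⟨x, y, by rw [hxy]; simp⟩
    have h3 := iter_infix φ (m₀ + K) h2
    rwa [← Function.iterate_add_apply] at h3
  -- Claim B : u' contains a full level-M block
  obtain ⟨tb, hb1, hb2⟩ := hfind M i'
  have hD : (msubst φ)^[M] [W (tb+1)] <:+: u' := by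
    rw [hblock M (tb+1), hui, hulen]
    apply factorAt_infix
    · omega
    · have e1 := hposS M tb
      have e2 := hposS M (tb+1)
      have l1 := hLmaxM (W tb)
      have l2 := hLmaxM (W (tb+1))
      have hCN : 2 * Cmax ^ (K + 2*k + 1) * N
          = Cmax ^ (K + 2*k + 1) * N + Cmax ^ (K + 2*k + 1) * N := by ring
      omega
  exact hA.trans ((hB.trans (hC (W (tb+1)))).trans hD)
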